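/- Let G be a locally compact Hausdorff group and let L, H be closed subgroups. Then the action of L on the homogeneous space G/H (by left translation) is proper if and only if for every compact subset S ⊆ G the set L ∩ SHS is relatively compact, where SHS = {a x b : a, b ∈ S, x ∈ H}. -/

import Mathlib

open Set Pointwise

/-- The coset space `G ⧸ H` of a topological group by a closed subgroup is Hausdorff. -/
lemma aux_t2_coset {G : Type*} [Group G] [TopologicalSpace G] [IsTopologicalGroup G]
    (H : Subgroup G) (hH : IsClosed (H : Set G)) : T2Space (G ⧸ H) := by
  constructor
  intro a b hab
  induction a using QuotientGroup.induction_on with | H x =>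
  induction b using QuotientGroup.induction_on with | H y =>
  -- `y` is not in the closed set `C = xH`
  have hC : IsClosed ((fun g => x⁻¹ * g) ⁻¹' (H : Set G)) :=
    hH.preimage (continuous_const.mul continuous_id)
  have hyC : y ∉ (fun g => x⁻¹ * g) ⁻¹' (H : Set G) := by
    intro hy
    exact hab (QuotientGroup.eq.mpr hy)
  have hU : ((fun g => x⁻¹ * g) ⁻¹' (H : Set G))ᶜ ∈ nhds y :=
    hC.isOpen_compl.mem_nhds hyC
  -- find an open symmetric neighborhood `V` of `1` with `V * V * y ⊆ Cᶜ`
  have hcont : Continuous fun p : G × G => p.1 * p.2 * y :=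
    (continuous_fst.mul continuous_snd).mul continuous_const
  have h1 : (fun p : G × G => p.1 * p.2 * y) (1, 1) = y := by simp
  have hmem : {p : G × G | p.1 * p.2 * y ∈ ((fun g => x⁻¹ * g) ⁻¹' (H : Set G))ᶜ}
      ∈ nhds ((1, 1) : G × G) := by
    have hca : ContinuousAt (fun p : G × G => p.1 * p.2 * y) (1, 1) := hcont.continuousAt
    exact hca.preimage_mem_nhds (by simpa using hU)
  rw [nhds_prod_eq, Filter.mem_prod_iff] at hmem
  obtain ⟨V₁, hV₁, V₂, hV₂, hV⟩ := hmem
  -- symmetric open neighborhood of 1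
  obtain ⟨W₁, hW₁sub, hW₁open, hW₁one⟩ := mem_nhds_iff.mp hV₁
  obtain ⟨W₂, hW₂sub, hW₂open, hW₂one⟩ := mem_nhds_iff.mp hV₂
  set V : Set G := (W₁⁻¹ ∩ W₂ : Set G) with hVdef
  have hVopen : IsOpen V := (hW₁open.inv).inter hW₂open
  have hVone : (1 : G) ∈ V := ⟨by simpa using hW₁one, hW₂one⟩
  have key : ∀ v₁ ∈ V, ∀ v₂ ∈ V, v₁⁻¹ * v₂ * y ∈
      ((fun g => x⁻¹ * g) ⁻¹' (H : Set G))ᶜ := by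
    intro v₁ hv₁ v₂ hv₂
    have h1 : v₁⁻¹ ∈ W₁ := by simpa using hv₁.1
    have h2 : v₂ ∈ W₂ := hv₂.2
    exact hV (Set.mk_mem_prod (hW₁sub h1) (hW₂sub h2))
  -- the two open sets in the quotient
  refine ⟨QuotientGroup.mk '' ((fun v => v * x) '' V),
    QuotientGroup.mk '' ((fun v => v * y) '' V), ?_, ?_, ?_, ?_, ?_⟩
  · exact QuotientGroup.isOpenMap_coe _ ((isOpenMap_mul_right x) V hVopen)
  · exact QuotientGroup.isOpenMap_coe _ ((isOpenMap_mul_right y) V hVopen)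
  · exact ⟨1 * x, ⟨1, hVone, rfl⟩, by simp⟩
  · exact ⟨1 * y, ⟨1, hVone, rfl⟩, by simp⟩
  · rw [Set.disjoint_left]
    rintro z ⟨w₁, ⟨v₁, hv₁, rfl⟩, hz₁⟩ ⟨w₂, ⟨v₂, hv₂, rfl⟩, hz₂⟩
    have : QuotientGroup.mk (v₁ * x) = (QuotientGroup.mk (v₂ * y) : G ⧸ H) :=
      hz₁.trans hz₂.symm
    rw [QuotientGroup.eq] at this
    have hkey := key v₁ hv₁ v₂ hv₂
    simp only [Set.mem_compl_iff, Set.mem_preimage, SetLike.mem_coe] at hkey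
    have heq : (v₁ * x)⁻¹ * (v₂ * y) = x⁻¹ * (v₁⁻¹ * v₂ * y) := by group
    rw [heq] at this
    exact hkey this

/-- Every compact subset of `G ⧸ H` is the image of a compact subset of `G` when `G` is
locally compact. -/
lemma aux_compact_lift {G : Type*} [Group G] [TopologicalSpace G] [IsTopologicalGroup G]
    [LocallyCompactSpace G] (H : Subgroup G) {K : Set (G ⧸ H)} (hK : IsCompact K) :
    ∃ S : Set G, IsCompact S ∧ K ⊆ QuotientGroup.mk '' S := by
  choose C hCcomp hCnhds using fun q : G ⧸ H => exists_compact_mem_nhds (Quotient.out q)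
  have hcover : K ⊆ ⋃ q : G ⧸ H, QuotientGroup.mk '' interior (C q) := by
    intro q hq
    refine Set.mem_iUnion.mpr ⟨q, Quotient.out q, mem_interior_iff_mem_nhds.mpr (hCnhds q), ?_⟩
    exact QuotientGroup.out_eq' q
  obtain ⟨t, ht⟩ := hK.elim_finite_subcover (fun q => QuotientGroup.mk '' interior (C q))
    (fun q => QuotientGroup.isOpenMap_coe _ isOpen_interior) hcover
  refine ⟨⋃ q ∈ t, C q, t.isCompact_biUnion fun q _ => hCcomp q, ?_⟩
  intro q hq
  obtain ⟨i, hi, g, hg, rfl⟩ := by simpa using ht hq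
  exact ⟨g, Set.mem_biUnion hi (interior_subset hg), rfl⟩

theorem proper_on_quotient_iff_inter_SHS_relCompact {G : Type*} [Group G] [TopologicalSpace G]
    [IsTopologicalGroup G] [LocallyCompactSpace G] [T2Space G]
    (L H : Subgroup G) (hL : IsClosed (L : Set G)) (hH : IsClosed (H : Set G)) :
    (∀ K : Set (G ⧸ H), IsCompact K →
        IsCompact {ℓ : G | ℓ ∈ L ∧ ∃ q ∈ K, ℓ • q ∈ K}) ↔
    (∀ S : Set G, IsCompact S →
        IsCompact (closure ((L : Set G) ∩ (S * (H : Set G) * S)))) := by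
  constructor
  · -- proper → relatively compact
    intro hproper S hS
    set S' : Set G := S ∪ S⁻¹ with hS'def
    have hS' : IsCompact S' := hS.union hS.inv
    have hK : IsCompact (QuotientGroup.mk '' S' : Set (G ⧸ H)) :=
      hS'.image QuotientGroup.continuous_mk
    have hT := hproper _ hK
    refine IsCompact.of_isClosed_subset hT isClosed_closure
      (closure_minimal ?_ hT.isClosed)
    rintro ℓ ⟨hℓL, hℓ⟩
    obtain ⟨c, hc, b, hb, rfl⟩ := hℓ
    obtain ⟨a, ha, h, hh, rfl⟩ := hc
    refine ⟨hℓL, QuotientGroup.mk b⁻¹, ⟨b⁻¹, Or.inr (Set.inv_mem_inv.mpr hb), rfl⟩, ?_⟩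
    have : (a * h * b) • (QuotientGroup.mk b⁻¹ : G ⧸ H) = QuotientGroup.mk a := by
      rw [MulAction.Quotient.smul_mk]
      refine (QuotientGroup.eq.mpr ?_).symm
      have he : a⁻¹ * ((a * h * b) • b⁻¹) = h := by
        simp only [smul_eq_mul]; group
      rw [he]
      exact hh
    rw [this]
    exact ⟨a, Or.inl ha, rfl⟩
  · -- relatively compact → proper
    intro hrel K hK
    haveI := aux_t2_coset H hH
    obtain ⟨S, hScomp, hKS⟩ := aux_compact_lift H hK
    set S' : Set G := S ∪ S⁻¹ with hS'def
    have hSsub : S ⊆ S' := Set.subset_union_left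
    have hC := hrel S' (hScomp.union hScomp.inv)
    -- the set in question is closed
    haveI : CompactSpace ↥K := isCompact_iff_compactSpace.mp hK
    have hKcl : IsClosed K := hK.isClosed
    have hA : IsClosed {p : G × ↥K | p.1 • (p.2 : G ⧸ H) ∈ K} :=
      hKcl.preimage (continuous_fst.smul (continuous_subtype_val.comp continuous_snd))
    have hF : IsClosed (Prod.fst '' {p : G × ↥K | p.1 • (p.2 : G ⧸ H) ∈ K}) :=
      isClosedMap_fst_of_compactSpace _ hA
    have hTeq : {ℓ : G | ℓ ∈ L ∧ ∃ q ∈ K, ℓ • q ∈ K} =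
        (L : Set G) ∩ Prod.fst '' {p : G × ↥K | p.1 • (p.2 : G ⧸ H) ∈ K} := by
      ext ℓ
      constructor
      · rintro ⟨hℓL, q, hq, hℓq⟩
        exact ⟨hℓL, (ℓ, ⟨q, hq⟩), hℓq, rfl⟩
      · rintro ⟨hℓL, ⟨ℓ', q⟩, hp, rfl⟩
        exact ⟨hℓL, q, q.2, hp⟩
    have hTcl : IsClosed {ℓ : G | ℓ ∈ L ∧ ∃ q ∈ K, ℓ • q ∈ K} := hTeq ▸ hL.inter hF
    refine IsCompact.of_isClosed_subset hC hTcl ?_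
    rintro ℓ ⟨hℓL, q, hq, hℓq⟩
    refine subset_closure ⟨hℓL, ?_⟩
    obtain ⟨s, hs, rfl⟩ := hKS hq
    obtain ⟨s', hs', heq⟩ := hKS hℓq
    rw [MulAction.Quotient.smul_mk] at heq
    have hmem : s'⁻¹ * (ℓ * s) ∈ H := QuotientGroup.eq.mp heq
    have hdecomp : ℓ = s' * (s'⁻¹ * (ℓ * s)) * s⁻¹ := by group
    rw [hdecomp]
    exact ⟨s' * (s'⁻¹ * (ℓ * s)), Set.mul_mem_mul (hSsub hs') hmem, s⁻¹,
      Or.inr (Set.inv_mem_inv.mpr hs), rfl⟩
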